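/- For odd κ = 2u+1, the set B_κ is in bijection with the quotient of V_κ by entrywise congruence modulo κ, where V_κ is the set of finite sequences of nonzero integers ν with |νᵢ| ≠ κ for all i, Σᵢ|νᵢ| = κ, and Σᵢνᵢ ∈ {0, κ, -κ}; moreover each equivalence class has at most 2 elements, and exactly 2u classes have 2 elements. -/

import Mathlib

/-- B_κ : lists of nonzero residues modulo κ summing to 0 in ℤ/κ whose entries
are congruent to -νᵢ for some integer list ν with Σ|νᵢ| = κ. -/
def Bset (κ : ℕ) : Set (List (ZMod κ)) :=
  {b | (∀ x ∈ b, x ≠ 0) ∧ b.sum = 0 ∧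
    ∃ ν : List ℤ, (ν.map (fun x => |x|)).sum = (κ : ℤ) ∧
      List.Forall₂ (fun (bi : ZMod κ) (νi : ℤ) => bi = -(νi : ZMod κ)) b ν}

/-- V_κ : lists of nonzero integers with |νᵢ| ≠ κ, Σ|νᵢ| = κ, and
Σνᵢ ∈ {0, κ, -κ}. -/
def Vset (κ : ℕ) : Set (List ℤ) :=
  {ν | (∀ x ∈ ν, x ≠ 0) ∧ (∀ x ∈ ν, |x| ≠ (κ : ℤ)) ∧
    (ν.map (fun x => |x|)).sum = (κ : ℤ) ∧
    (ν.sum = 0 ∨ ν.sum = (κ : ℤ) ∨ ν.sum = -(κ : ℤ))}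

/-- Entrywise congruence modulo κ (in particular equal lengths). -/
def cong (κ : ℕ) (ν ν' : List ℤ) : Prop :=
  List.Forall₂ (fun a b => (κ : ℤ) ∣ (a - b)) ν ν'

/-- The congruence relation restricted to V_κ. -/
def congRel (κ : ℕ) (a b : ↥(Vset κ)) : Prop := cong κ a.1 b.1

/-- flip: the other representative of the same residue class in (-κ,κ)∖{0}. -/
def flipK (κ : ℕ) (x : ℤ) : ℤ := x - κ * x.sign

lemma flipK_pos {κ : ℕ} {x : ℤ} (h : 0 < x) : flipK κ x = x - κ := by
  simp [flipK, Int.sign_eq_one_of_pos h]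

lemma flipK_neg {κ : ℕ} {x : ℤ} (h : x < 0) : flipK κ x = x + κ := by
  simp [flipK, Int.sign_eq_neg_one_of_neg h]

lemma dvd_sub_flipK (κ : ℕ) (x : ℤ) : (κ : ℤ) ∣ x - flipK κ x := by
  simp [flipK]

lemma abs_flipK {κ : ℕ} {x : ℤ} (h0 : x ≠ 0) (h : |x| < κ) :
    |flipK κ x| = κ - |x| ∧ flipK κ x ≠ 0 ∧ flipK κ x ≠ x := by
  have hκ : 0 < (κ : ℤ) := lt_of_le_of_lt (abs_nonneg x) h
  rcases lt_or_gt_of_ne h0 with hx | hx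
  · rw [flipK_neg hx, abs_of_neg hx] at *
    rw [abs_of_pos (by omega)]
    omega
  · rw [flipK_pos hx, abs_of_pos hx] at *
    rw [abs_of_neg (by omega)]
    omega

/-- pointwise classification of congruence for small nonzero integers -/
lemma cong_pointwise {κ : ℕ} {a b : ℤ} (ha : |a| < κ) (hb : |b| < κ)
    (hd : (κ : ℤ) ∣ a - b) :
    b = a ∨ (b = flipK κ a ∧ |a| + |b| = κ) := by
  have hκ : 0 < (κ : ℤ) := lt_of_le_of_lt (abs_nonneg a) ha
  obtain ⟨t, ht⟩ := hd
  have habs : |a - b| ≤ |a| + |b| := abs_sub a b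
  have h2 : |(κ : ℤ) * t| < 2 * κ := by rw [← ht]; omega
  rw [abs_mul, abs_of_pos hκ] at h2
  have ht1 : |t| ≤ 1 := by nlinarith [abs_nonneg t]
  obtain ⟨htl, htr⟩ := abs_le.mp ht1
  have ha' := abs_lt.mp ha
  have hb' := abs_lt.mp hb
  interval_cases t
  · have hx : a < 0 := by omega
    rw [flipK_neg hx]
    right
    rw [abs_of_neg hx, abs_of_pos (show 0 < b by omega)]
    omega
  · left; omega
  · have hx : 0 < a := by omega
    rw [flipK_pos hx]
    right
    rw [abs_of_pos hx, abs_of_neg (show b < 0 by omega)]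
    omega

lemma list_sum_fin {M : Type*} [AddCommMonoid M] (l : List M) :
    l.sum = ∑ i : Fin l.length, l.get i := by
  conv_lhs => rw [← List.ofFn_get l]
  rw [List.sum_ofFn]

lemma list_map_sum_fin (f : ℤ → ℤ) (l : List ℤ) :
    (l.map f).sum = ∑ i : Fin l.length, f (l.get i) := by
  conv_lhs => rw [← List.ofFn_get l, List.map_ofFn, List.sum_ofFn]
  rfl

lemma Vset_abs_lt {κ : ℕ} {ν : List ℤ} (hν : ν ∈ Vset κ) :
    ∀ x ∈ ν, 0 < |x| ∧ |x| < κ := by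
  obtain ⟨h0, hne, hsum, -⟩ := hν
  intro x hx
  have h1 : |x| ≤ (ν.map (fun y => |y|)).sum := by
    apply List.single_le_sum (fun y hy => ?_) _ (List.mem_map_of_mem hx)
    simp only [List.mem_map] at hy
    obtain ⟨z, -, rfl⟩ := hy
    exact abs_nonneg z
  have := h0 x hx
  have := hne x hx
  constructor
  · positivity
  · rw [hsum] at h1; omega

/-- Classification: two congruent elements of V are equal or flips. -/
lemma cong_cases {u : ℕ} {κ : ℕ} (hκu : κ = 2*u+1) {ν ν' : List ℤ}
    (hν : ν ∈ Vset κ) (hν' : ν' ∈ Vset κ) (hc : cong κ ν ν') :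
    ν' = ν ∨ ν' = ν.map (flipK κ) := by
  classical
  have hκ : 0 < (κ : ℤ) := by exact_mod_cast (by omega : 0 < κ)
  have hlen : ν.length = ν'.length := hc.length_eq
  have hb := Vset_abs_lt hν
  have hb' := Vset_abs_lt hν'
  set n := ν.length with hn
  set F : Fin n → ℤ := fun i => ν.get i with hF
  set G : Fin n → ℤ := fun i => ν'.get (Fin.cast hlen i) with hG
  have hpt : ∀ i : Fin n, G i = F i ∨ (G i = flipK κ (F i) ∧ |F i| + |G i| = κ) := by
    intro i
    apply cong_pointwise
    · exact (hb _ (List.get_mem ν i)).2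
    · exact (hb' _ (List.get_mem ν' (Fin.cast hlen i))).2
    · exact hc.get i.2 ((Fin.cast hlen i).2)
  have hs1 : ∑ i : Fin n, |F i| = κ := by
    rw [hF, ← list_map_sum_fin]; exact hν.2.2.1
  have hs2 : ∑ i : Fin n, |G i| = κ := by
    have : ∑ i : Fin ν'.length, |ν'.get i| = κ := by
      rw [← list_map_sum_fin]; exact hν'.2.2.1
    rw [← this]
    exact Fintype.sum_equiv (finCongr hlen) _ _ (fun i => rfl)
  set p : Fin n → Prop := fun i => G i ≠ F i with hp
  set c : ℕ := (Finset.univ.filter p).card with hcard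
  set SD : ℤ := ∑ i ∈ Finset.univ.filter p, |F i| with hSD
  set SDc : ℤ := ∑ i ∈ Finset.univ.filter (fun i => ¬ p i), |F i| with hSDc
  have e1 : SD + SDc = κ := by
    rw [hSD, hSDc, Finset.sum_filter_add_sum_filter_not]; exact hs1
  have e2 : (∑ i ∈ Finset.univ.filter p, |G i|) + SDc = κ := by
    have : ∑ i ∈ Finset.univ.filter (fun i => ¬ p i), |G i| = SDc := by
      apply Finset.sum_congr rfl
      intro i hi
      rw [Finset.mem_filter] at hi
      rw [not_ne_iff.mp hi.2]
    rw [← this, Finset.sum_filter_add_sum_filter_not]; exact hs2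
  have e3 : SD + (∑ i ∈ Finset.univ.filter p, |G i|) = (c : ℤ) * κ := by
    rw [hSD, ← Finset.sum_add_distrib]
    rw [Finset.sum_congr rfl (fun i hi => ?_), Finset.sum_const, nsmul_eq_mul]
    rcases hpt i with h | ⟨-, h⟩
    · exact absurd h (Finset.mem_filter.mp hi).2
    · exact h
  have hSDnonneg : 0 ≤ SD := Finset.sum_nonneg (fun i _ => abs_nonneg _)
  have hSDcnonneg : 0 ≤ SDc := Finset.sum_nonneg (fun i _ => abs_nonneg _)
  have hkey : (c : ℤ) * κ = 2 * SD := by linarith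
  have hceven : Even c := by
    have : Even ((c : ℤ) * κ) := ⟨SD, by linarith⟩
    rcases Int.even_mul.mp this with h | h
    · exact_mod_cast h
    · exfalso; obtain ⟨m, hm⟩ := h; omega
  have hcle : c ≤ 2 := by
    have h2 : (c : ℤ) * κ ≤ 2 * κ := by linarith
    have := le_of_mul_le_mul_right h2 hκ
    exact_mod_cast this
  obtain ⟨k, hk⟩ := hceven
  interval_cases c
  · -- no flipped entries
    left
    have hemp : Finset.univ.filter p = ∅ := Finset.card_eq_zero.mp hcard.symm
    have hall : ∀ i : Fin n, G i = F i := by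
      intro i
      by_contra hne
      have : i ∈ Finset.univ.filter p := Finset.mem_filter.mpr ⟨Finset.mem_univ _, hne⟩
      rw [hemp] at this
      exact absurd this (Finset.notMem_empty _)
    apply List.ext_get hlen.symm
    intro i h1 h2
    exact hall ⟨i, h2⟩
  · omega
  · -- all entries flipped
    right
    norm_num at hkey
    have hSDκ : SD = κ := by linarith
    have hSDc0 : SDc = 0 := by linarith
    have hallp : ∀ i : Fin n, p i := by
      intro i
      by_contra hnp
      have hi : i ∈ Finset.univ.filter (fun i => ¬ p i) :=
        Finset.mem_filter.mpr ⟨Finset.mem_univ _, fun hh => hh hnp⟩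
      have h0 : |F i| = 0 := by
        have := (Finset.sum_eq_zero_iff_of_nonneg (fun j _ => abs_nonneg (F j))).mp hSDc0
        exact this i hi
      have h1 : 0 < |F i| := (hb (F i) (List.get_mem ν i)).1
      omega
    apply List.ext_get (by rw [List.length_map]; exact hlen.symm)
    intro i h1 h2
    have h2' : i < n := by simpa using h2
    simp only [List.get_eq_getElem, List.getElem_map]
    rcases hpt ⟨i, h2'⟩ with h | ⟨h, -⟩
    · exact absurd h (hallp ⟨i, h2'⟩)
    · exact h

lemma cong_flip (κ : ℕ) (ν : List ℤ) : cong κ ν (ν.map (flipK κ)) := by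
  rw [cong, List.forall₂_map_right_iff]
  exact List.forall₂_same.mpr (fun x _ => dvd_sub_flipK κ x)

lemma Vset_ne_nil {κ : ℕ} (hκ : 0 < κ) {ν : List ℤ} (hν : ν ∈ Vset κ) : ν ≠ [] := by
  intro h
  have := hν.2.2.1
  rw [h] at this
  simp at this
  omega

lemma flip_ne {κ : ℕ} (hκ : 0 < κ) {ν : List ℤ} (hν : ν ∈ Vset κ) :
    ν.map (flipK κ) ≠ ν := by
  have hb := Vset_abs_lt hν
  cases ν with
  | nil => exact absurd rfl (Vset_ne_nil hκ hν)
  | cons a t =>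
    intro h
    have h0 : a ≠ 0 := hν.1 a (by simp)
    have hlt := (hb a (by simp)).2
    simp only [List.map_cons, List.cons.injEq] at h
    exact (abs_flipK h0 hlt).2.2 h.1

lemma flip_mem_length {κ u : ℕ} (hκu : κ = 2*u+1) {ν : List ℤ} (hν : ν ∈ Vset κ)
    (hf : ν.map (flipK κ) ∈ Vset κ) : ν.length = 2 := by
  have hb := Vset_abs_lt hν
  have h1 : ((ν.map (flipK κ)).map (fun x => |x|)).sum = κ := hf.2.2.1
  rw [List.map_map, list_map_sum_fin] at h1
  have h2 : ∑ i : Fin ν.length, ((fun x => |x|) ∘ flipK κ) (ν.get i)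
      = ∑ i : Fin ν.length, ((κ:ℤ) - |ν.get i|) := by
    apply Finset.sum_congr rfl
    intro i _
    have hx := hb (ν.get i) (List.get_mem ν i)
    have h0 : ν.get i ≠ 0 := by
      intro h; rw [h] at hx; simp at hx
    simpa [Function.comp] using (abs_flipK h0 hx.2).1
  rw [h2, Finset.sum_sub_distrib, Finset.sum_const, Finset.card_univ, Fintype.card_fin] at h1
  have h3 : ∑ i : Fin ν.length, |ν.get i| = κ := by
    rw [← list_map_sum_fin]; exact hν.2.2.1
  rw [h3, nsmul_eq_mul] at h1
  have hκ : 0 < (κ:ℤ) := by exact_mod_cast (by omega : 0 < κ)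
  have h4 : (ν.length : ℤ) * κ = 2 * κ := by linarith
  have := mul_right_cancel₀ (ne_of_gt hκ) h4
  exact_mod_cast this

lemma pair_structure {κ u : ℕ} (hκu : κ = 2*u+1) {a b : ℤ}
    (h : [a, b] ∈ Vset κ) :
    (0 < a ∧ 0 < b ∧ a + b = κ) ∨ (a < 0 ∧ b < 0 ∧ a + b = -κ) := by
  obtain ⟨h0, hne, hsum, hs⟩ := h
  have ha0 : a ≠ 0 := h0 a (by simp)
  have hb0 : b ≠ 0 := h0 b (by simp)
  simp only [List.map_cons, List.map_nil, List.sum_cons, List.sum_nil, add_zero] at hsum hs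
  rcases lt_or_gt_of_ne ha0 with ha | ha <;> rcases lt_or_gt_of_ne hb0 with hb | hb
  · rw [abs_of_neg ha, abs_of_neg hb] at hsum; right; omega
  · rw [abs_of_neg ha, abs_of_pos hb] at hsum; exfalso; omega
  · rw [abs_of_pos ha, abs_of_neg hb] at hsum; exfalso; omega
  · rw [abs_of_pos ha, abs_of_pos hb] at hsum; left; omega

lemma flip_pair_mem {κ u : ℕ} (hκu : κ = 2*u+1) {ν : List ℤ} (hν : ν ∈ Vset κ)
    (hl : ν.length = 2) : ν.map (flipK κ) ∈ Vset κ := by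
  obtain ⟨a, b, rfl⟩ : ∃ a b, ν = [a, b] := by
    match ν, hl with | [a,b], _ => exact ⟨a, b, rfl⟩
  have hba := Vset_abs_lt hν
  have ha' := abs_lt.mp (hba a (by simp)).2
  have hb' := abs_lt.mp (hba b (by simp)).2
  rcases pair_structure hκu hν with ⟨ha, hb, hab⟩ | ⟨ha, hb, hab⟩
  · rw [List.map_cons, List.map_cons, List.map_nil, flipK_pos ha, flipK_pos hb]
    refine ⟨?_, ?_, ?_, ?_⟩
    · intro x hx; simp at hx; rcases hx with rfl | rfl <;> omega
    · intro x hx; simp at hx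
      rcases hx with rfl | rfl <;> rw [abs_of_neg (by omega)] <;> omega
    · simp only [List.map_cons, List.map_nil, List.sum_cons, List.sum_nil, add_zero]
      rw [abs_of_neg (by omega), abs_of_neg (by omega)]; omega
    · right; right
      simp only [List.sum_cons, List.sum_nil, add_zero]; omega
  · rw [List.map_cons, List.map_cons, List.map_nil, flipK_neg ha, flipK_neg hb]
    refine ⟨?_, ?_, ?_, ?_⟩
    · intro x hx; simp at hx; rcases hx with rfl | rfl <;> omega
    · intro x hx; simp at hx
      rcases hx with rfl | rfl <;> rw [abs_of_pos (by omega)] <;> omega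
    · simp only [List.map_cons, List.map_nil, List.sum_cons, List.sum_nil, add_zero]
      rw [abs_of_pos (by omega), abs_of_pos (by omega)]; omega
    · right; left
      simp only [List.sum_cons, List.sum_nil, add_zero]; omega

/-- the natural map from integer lists to lists of residues -/
def toB (κ : ℕ) (ν : List ℤ) : List (ZMod κ) := ν.map (fun x : ℤ => -(x : ZMod κ))

lemma toB_sum (κ : ℕ) (ν : List ℤ) : (toB κ ν).sum = -((ν.sum : ℤ) : ZMod κ) := by
  induction ν with
  | nil => simp [toB]
  | cons a t ih =>
    simp only [toB, List.map_cons, List.sum_cons] at *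
    rw [ih]
    push_cast
    ring

lemma cast_ne_zero' {κ : ℕ} {x : ℤ} (h0 : x ≠ 0) (h : |x| < κ) :
    ((x : ZMod κ) ≠ 0) := by
  rw [Ne, ZMod.intCast_zmod_eq_zero_iff_dvd]
  intro hd
  exact h0 (Int.eq_zero_of_abs_lt_dvd hd h)

lemma toB_mem {κ u : ℕ} (hκu : κ = 2*u+1) {ν : List ℤ} (hν : ν ∈ Vset κ) :
    toB κ ν ∈ Bset κ := by
  have hb := Vset_abs_lt hν
  refine ⟨?_, ?_, ν, hν.2.2.1, ?_⟩
  · intro x hx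
    rw [toB, List.mem_map] at hx
    obtain ⟨y, hy, rfl⟩ := hx
    exact neg_ne_zero.mpr (cast_ne_zero' (hν.1 y hy) (hb y hy).2)
  · rw [toB_sum]
    have : ((ν.sum : ℤ) : ZMod κ) = 0 := by
      rcases hν.2.2.2 with h | h | h <;> rw [h] <;> push_cast <;>
        simp [ZMod.natCast_self]
    rw [this, neg_zero]
  · rw [toB, List.forall₂_map_left_iff]
    exact List.forall₂_same.mpr (fun x _ => rfl)

lemma toB_eq_of_cong {κ : ℕ} {ν ν' : List ℤ} (h : cong κ ν ν') :
    toB κ ν = toB κ ν' := by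
  induction h with
  | nil => rfl
  | @cons a b l1 l2 hab _ ih =>
    simp only [toB, List.map_cons] at *
    rw [ih]
    congr 1
    have : ((a : ZMod κ)) = b := by
      rw [ZMod.intCast_eq_intCast_iff_dvd_sub]
      exact (dvd_sub_comm).mp hab
    rw [this]

lemma cong_of_toB_eq {κ : ℕ} {ν ν' : List ℤ} (h : toB κ ν = toB κ ν') :
    cong κ ν ν' := by
  have hlen : ν.length = ν'.length := by
    have := congrArg List.length h
    simpa [toB] using this
  apply List.forall₂_of_length_eq_of_get hlen
  intro i h1 h2
  have hthis : (toB κ ν)[i]'(by simpa [toB] using h1) =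
      (toB κ ν')[i]'(by simpa [toB] using h2) := by
    simp only [h]
  simp only [toB, List.getElem_map] at hthis
  have h3 : ((ν.get ⟨i, h1⟩ : ℤ) : ZMod κ) = (ν'.get ⟨i, h2⟩ : ℤ) := by
    simpa using neg_injective hthis
  rw [ZMod.intCast_eq_intCast_iff_dvd_sub] at h3
  exact dvd_sub_comm.mp h3

lemma exists_toB {κ u : ℕ} (hκu : κ = 2*u+1) {b : List (ZMod κ)}
    (hb : b ∈ Bset κ) : ∃ ν ∈ Vset κ, toB κ ν = b := by
  obtain ⟨hb0, hbsum, ν, hνsum, hf⟩ := hb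
  have hlen := hf.length_eq
  have hbeq : b = toB κ ν := by
    apply List.ext_get (by simpa [toB] using hlen)
    intro i h1 h2
    simp only [toB, List.get_eq_getElem, List.getElem_map]
    exact hf.get h1 (by simpa [toB] using h2)
  -- entries of ν are not divisible by κ
  have hnd : ∀ x ∈ ν, ¬ (κ:ℤ) ∣ x := by
    intro x hx hdvd
    obtain ⟨i, hi⟩ := List.mem_iff_get.mp hx
    have hibound : i.1 < b.length := by rw [hlen]; exact i.2
    have h1 : b.get ⟨i.1, hibound⟩ = -((x : ℤ) : ZMod κ) := by
      have := hf.get hibound i.2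
      rw [hi] at this
      exact this
    have h2 : ((x : ℤ) : ZMod κ) = 0 := (ZMod.intCast_zmod_eq_zero_iff_dvd x κ).mpr hdvd
    have := hb0 _ (List.get_mem b ⟨i.1, hibound⟩)
    rw [h1, h2, neg_zero] at this
    exact this rfl
  refine ⟨ν, ⟨?_, ?_, hνsum, ?_⟩, hbeq.symm⟩
  · intro x hx h0
    exact hnd x hx (h0 ▸ dvd_zero _)
  · intro x hx habs
    rcases abs_eq (by positivity : (0:ℤ) ≤ (κ:ℤ)) |>.mp habs with h | h <;>
      exact hnd x hx (h ▸ by simp)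
  · -- sum is 0, κ or -κ
    have hcast : ((ν.sum : ℤ) : ZMod κ) = 0 := by
      have := toB_sum κ ν
      rw [← hbeq, hbsum] at this
      exact (neg_eq_zero.mp this.symm)
    have hdvd : (κ:ℤ) ∣ ν.sum := (ZMod.intCast_zmod_eq_zero_iff_dvd _ κ).mp hcast
    have habs : |ν.sum| ≤ (κ:ℤ) := by
      have h1 : |ν.sum| ≤ (ν.map (fun x => |x|)).sum := by
        rw [list_sum_fin ν, list_map_sum_fin]
        exact Finset.abs_sum_le_sum_abs _ _
      rw [hνsum] at h1
      exact h1
    rcases lt_or_eq_of_le habs with h | h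
    · left; exact Int.eq_zero_of_abs_lt_dvd hdvd h
    · rcases abs_eq (by positivity : (0:ℤ) ≤ (κ:ℤ)) |>.mp h with h' | h'
      · right; left; exact h'
      · right; right; exact h'

lemma congRel_equiv (κ : ℕ) : Equivalence (congRel κ) := by
  constructor
  · intro a
    exact List.forall₂_same.mpr (fun x _ => by simp)
  · intro a b h
    exact List.Forall₂.flip (h.imp (fun x y hxy => dvd_sub_comm.mp hxy))
  · intro a b c hab hbc
    apply List.forall₂_of_length_eq_of_get (hab.length_eq.trans hbc.length_eq)
    intro i h1 h2
    have hib : i < b.1.length := hab.length_eq ▸ h1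
    have k1 := hab.get h1 hib
    have k2 := hbc.get hib h2
    have := dvd_add k1 k2
    rwa [sub_add_sub_cancel] at this

lemma quot_mk_eq_iff {κ : ℕ} (x y : ↥(Vset κ)) :
    Quot.mk (congRel κ) x = Quot.mk (congRel κ) y ↔ congRel κ x y := by
  rw [Quot.eq]
  exact (congRel_equiv κ).eqvGen_iff

lemma fiber_card_eq_two_iff {κ u : ℕ} (hκu : κ = 2*u+1) (x : ↥(Vset κ)) :
    Set.ncard {y : ↥(Vset κ) | Quot.mk (congRel κ) y = Quot.mk (congRel κ) x} = 2 ↔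
    x.1.length = 2 := by
  have hκ : 0 < κ := by omega
  have hfib : {y : ↥(Vset κ) | Quot.mk (congRel κ) y = Quot.mk (congRel κ) x}
      = {y : ↥(Vset κ) | cong κ x.1 y.1} := by
    ext y
    rw [Set.mem_setOf_eq, Set.mem_setOf_eq, quot_mk_eq_iff]
    exact ⟨fun h => (congRel_equiv κ).symm h, fun h => (congRel_equiv κ).symm h⟩
  rw [hfib]
  constructor
  · intro h2
    by_contra hne
    have hone : {y : ↥(Vset κ) | cong κ x.1 y.1} = {x} := by
      ext y
      simp only [Set.mem_setOf_eq, Set.mem_singleton_iff]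
      constructor
      · intro hc
        rcases cong_cases hκu x.2 y.2 hc with h | h
        · exact Subtype.ext h
        · exfalso
          apply hne
          exact flip_mem_length hκu x.2 (h ▸ y.2)
      · rintro rfl
        exact (congRel_equiv κ).refl _
    rw [hone, Set.ncard_singleton] at h2
    omega
  · intro hlen
    have hx' : x.1.map (flipK κ) ∈ Vset κ := flip_pair_mem hκu x.2 hlen
    set x' : ↥(Vset κ) := ⟨x.1.map (flipK κ), hx'⟩ with hx'def
    have hpair : {y : ↥(Vset κ) | cong κ x.1 y.1} = {x, x'} := by
      ext y
      simp only [Set.mem_setOf_eq, Set.mem_insert_iff, Set.mem_singleton_iff]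
      constructor
      · intro hc
        rcases cong_cases hκu x.2 y.2 hc with h | h
        · left; exact Subtype.ext h
        · right; exact Subtype.ext h
      · rintro (rfl | rfl)
        · exact (congRel_equiv κ).refl y
        · exact cong_flip κ x.1
    rw [hpair]
    apply Set.ncard_pair
    intro h
    exact flip_ne hκ x.2 (congrArg Subtype.val h).symm

/-- For odd κ = 2u+1, B_κ is in bijection with the quotient V_κ/≡ of V_κ by
entrywise congruence modulo κ; each congruence class (within V_κ) has at most
two elements, and exactly 2u classes have two elements. -/
theorem Bset_bij_quotient_odd (u : ℕ) :
    Nonempty (↥(Bset (2 * u + 1)) ≃ Quot (congRel (2 * u + 1))) ∧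
    (∀ ν ∈ Vset (2 * u + 1),
      Set.ncard {ν' | ν' ∈ Vset (2 * u + 1) ∧ cong (2 * u + 1) ν ν'} ≤ 2) ∧
    Set.ncard {c : Quot (congRel (2 * u + 1)) |
        Set.ncard {x : ↥(Vset (2 * u + 1)) | Quot.mk (congRel (2 * u + 1)) x = c} = 2}
      = 2 * u := by
  set κ := 2 * u + 1 with hκu
  have hκ : 0 < κ := by omega
  refine ⟨?_, ?_, ?_⟩
  · -- bijection
    have hresp : ∀ p q : ↥(Vset κ), congRel κ p q →
        (⟨toB κ p.1, toB_mem hκu p.2⟩ : ↥(Bset κ)) = ⟨toB κ q.1, toB_mem hκu q.2⟩ :=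
      fun p q hpq => Subtype.ext (toB_eq_of_cong hpq)
    have hGbij : Function.Bijective
        (Quot.lift (fun p : ↥(Vset κ) => (⟨toB κ p.1, toB_mem hκu p.2⟩ : ↥(Bset κ))) hresp) := by
      constructor
      · intro x y
        refine Quot.induction_on₂ x y ?_
        intro p q h
        apply Quot.sound
        exact cong_of_toB_eq (congrArg Subtype.val h)
      · intro b
        obtain ⟨ν, hν, htb⟩ := exists_toB hκu b.2
        exact ⟨Quot.mk _ ⟨ν, hν⟩, Subtype.ext htb⟩
    exact ⟨(Equiv.ofBijective _ hGbij).symm⟩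
  · -- classes have at most two elements
    intro ν hν
    have hsub : {ν' | ν' ∈ Vset κ ∧ cong κ ν ν'} ⊆ {ν, ν.map (flipK κ)} := by
      rintro ν' ⟨h1, h2⟩
      rcases cong_cases hκu hν h1 h2 with h | h
      · exact Or.inl h
      · exact Or.inr h
    have h1 := Set.ncard_le_ncard hsub (Set.toFinite _)
    have h2 : ({ν, ν.map (flipK κ)} : Set (List ℤ)).ncard ≤ 2 := by
      apply le_trans (Set.ncard_insert_le _ _)
      simp
    omega
  · -- exactly 2u classes of size two
    set Tpos : Set (↥(Vset κ)) := {y | ∃ a : ℤ, 0 < a ∧ y.1 = [a, (κ:ℤ) - a]} with hT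
    have habsbound : ∀ (y : ↥(Vset κ)) (a : ℤ), y.1 = [a, (κ:ℤ) - a] → |a| < κ := by
      intro y a hy
      exact ((Vset_abs_lt y.2) a (by rw [hy]; simp)).2
    have hSimg : {c : Quot (congRel κ) |
        Set.ncard {x : ↥(Vset κ) | Quot.mk (congRel κ) x = c} = 2}
        = (Quot.mk (congRel κ)) '' Tpos := by
      ext c
      simp only [Set.mem_setOf_eq, Set.mem_image]
      constructor
      · intro hc
        obtain ⟨x, rfl⟩ := Quot.exists_rep c
        have hlen : x.1.length = 2 := (fiber_card_eq_two_iff hκu x).mp hc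
        obtain ⟨a, b, hx⟩ : ∃ a b, x.1 = [a, b] := by
          rcases hl : x.1 with _ | ⟨a, _ | ⟨b, _ | ⟨c', t⟩⟩⟩ <;>
            rw [hl] at hlen <;> simp at hlen
          exact ⟨a, b, rfl⟩
        have hxV : [a, b] ∈ Vset κ := hx ▸ x.2
        rcases pair_structure hκu hxV with ⟨ha, hb, hab⟩ | ⟨ha, hb, hab⟩
        · refine ⟨x, ⟨a, ha, ?_⟩, rfl⟩
          rw [hx]
          have hb' : b = (κ:ℤ) - a := by omega
          rw [hb']
        · have hx' : x.1.map (flipK κ) ∈ Vset κ := flip_pair_mem hκu x.2 hlen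
          refine ⟨⟨x.1.map (flipK κ), hx'⟩, ⟨a + κ, by omega, ?_⟩, ?_⟩
          · show x.1.map (flipK κ) = [a + κ, (κ:ℤ) - (a + κ)]
            rw [hx, List.map_cons, List.map_cons, List.map_nil, flipK_neg ha, flipK_neg hb]
            have : b + κ = (κ:ℤ) - (a + κ) := by omega
            rw [this]
          · exact (Quot.sound (show congRel κ x ⟨x.1.map (flipK κ), hx'⟩ from cong_flip κ x.1)).symm
      · rintro ⟨y, ⟨a, ha, hy⟩, rfl⟩
        apply (fiber_card_eq_two_iff hκu y).mpr
        simp [hy]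
    rw [hSimg]
    have hinj : Set.InjOn (Quot.mk (congRel κ)) Tpos := by
      rintro y ⟨a, ha, hy⟩ y' ⟨a', ha', hy'⟩ heq
      have hc : congRel κ y y' := (quot_mk_eq_iff y y').mp heq
      have hc' : cong κ [a, (κ:ℤ) - a] [a', (κ:ℤ) - a'] := by
        rw [← hy, ← hy']; exact hc
      have hd : (κ:ℤ) ∣ a - a' := by
        cases hc' with
        | cons hd _ => exact hd
      have hba := abs_lt.mp (habsbound y a hy)
      have hba' := abs_lt.mp (habsbound y' a' hy')
      have : a - a' = 0 := by
        apply Int.eq_zero_of_abs_lt_dvd hd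
        have := abs_lt.mpr (show -(κ:ℤ) < a - a' ∧ a - a' < κ by omega)
        exact this
      apply Subtype.ext
      rw [hy, hy']
      have : a = a' := by omega
      rw [this]
    rw [Set.ncard_image_of_injOn hinj]
    have hval : Subtype.val '' Tpos
        = (fun a : ℤ => [a, (κ:ℤ) - a]) '' (Set.Icc 1 (2*u : ℤ)) := by
      ext l
      simp only [Set.mem_image, Set.mem_Icc]
      constructor
      · rintro ⟨y, ⟨a, ha, hy⟩, rfl⟩
        have := abs_lt.mp (habsbound y a hy)
        exact ⟨a, ⟨by omega, by omega⟩, hy.symm⟩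
      · rintro ⟨a, ⟨ha1, ha2⟩, rfl⟩
        have hmem : [a, (κ:ℤ) - a] ∈ Vset κ := by
          refine ⟨?_, ?_, ?_, ?_⟩
          · intro x hx; simp at hx; rcases hx with rfl | rfl <;> omega
          · intro x hx; simp at hx
            rcases hx with rfl | rfl <;> rw [abs_of_pos (by omega)] <;> omega
          · simp only [List.map_cons, List.map_nil, List.sum_cons, List.sum_nil, add_zero]
            rw [abs_of_pos (by omega), abs_of_pos (by omega)]; omega
          · right; left
            simp only [List.sum_cons, List.sum_nil, add_zero]; omega
        exact ⟨⟨_, hmem⟩, ⟨a, by omega, rfl⟩, rfl⟩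
    have h1 : Tpos.ncard
        = ((fun a : ℤ => [a, (κ:ℤ) - a]) '' (Set.Icc 1 (2*u : ℤ))).ncard := by
      rw [← hval, Set.ncard_image_of_injective _ Subtype.val_injective]
    rw [h1, Set.ncard_image_of_injOn (by
      rintro a _ a' _ h
      simp only [List.cons.injEq, and_true] at h
      exact h.1)]
    rw [← Finset.coe_Icc, Set.ncard_coe_finset, Int.card_Icc]
    omega
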